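/- For every integer $n \ge 4$, the number of magic quad squares using cards from the EvenQuads-$2^n$ deck equals $2^n(2^n-1)(2^n-2)(2^n-4)(2^n-8)$ times the number of magic quad squares of type C over the same deck. -/

import Mathlib

/-- A card in the EvenQuads-`2^n` deck, modeled as a vector in `(ℤ/2)^n`. -/
abbrev Deck (n : ℕ) := Fin n → ZMod 2

/-- Identification of the integer `k` (via binary representation) with a card. -/
def numToCard (n k : ℕ) : Deck n := fun i => if Nat.testBit k i.val then 1 else 0

/-- A quad square is semimagic if every row and every column sums to zero. -/
def IsSemimagic {n : ℕ} (M : Fin 4 × Fin 4 → Deck n) : Prop :=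
  (∀ i : Fin 4, ∑ j : Fin 4, M (i, j) = 0) ∧ (∀ j : Fin 4, ∑ i : Fin 4, M (i, j) = 0)

/-- A quad square is magic if it is semimagic and both diagonals sum to zero. -/
def IsMagic {n : ℕ} (M : Fin 4 × Fin 4 → Deck n) : Prop :=
  IsSemimagic M ∧ (∑ i : Fin 4, M (i, i) = 0) ∧ (∑ i : Fin 4, M (i, 3 - i) = 0)

/-- Identification of `Fin 4` with `(ℤ/2)^2` via binary representation. -/
def finToVec (a : Fin 4) : Fin 2 → ZMod 2 := fun i => if Nat.testBit a.val i.val then 1 else 0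

/-- A grid position as an element of `(ℤ/2)^2 × (ℤ/2)^2 ≅ (ℤ/2)^4`. -/
def posVec (p : Fin 4 × Fin 4) : (Fin 2 → ZMod 2) × (Fin 2 → ZMod 2) :=
  (finToVec p.1, finToVec p.2)

/-- A quad square is strongly magic if any four pairwise distinct positions summing to
zero in `(ℤ/2)^4` carry cards summing to zero. -/
def IsStronglyMagic {n : ℕ} (M : Fin 4 × Fin 4 → Deck n) : Prop :=
  ∀ p1 p2 p3 p4 : Fin 4 × Fin 4,
    p1 ≠ p2 → p1 ≠ p3 → p1 ≠ p4 → p2 ≠ p3 → p2 ≠ p4 → p3 ≠ p4 →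
    posVec p1 + posVec p2 + posVec p3 + posVec p4 = 0 →
    M p1 + M p2 + M p3 + M p4 = 0

/-- A quad square is of type C if its first row is `0,1,2,3` and
its first column is `0,4,8,12`. -/
def IsTypeC {n : ℕ} (M : Fin 4 × Fin 4 → Deck n) : Prop :=
  (∀ j : Fin 4, M (0, j) = numToCard n j.val) ∧
  (∀ i : Fin 4, M (i, 0) = numToCard n (4 * i.val))

/-! ### Auxiliary material -/

section Aux

lemma deck_add_self {n : ℕ} (a : Deck n) : a + a = 0 := by
  funext j
  have : ∀ x : ZMod 2, x + x = 0 := by decide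
  exact this (a j)

lemma deck_two {n : ℕ} : (2 : Deck n) = 0 := by
  funext j; show (2 : ZMod 2) = 0; decide

lemma deck_eq_of_add_eq_zero {n : ℕ} {a b : Deck n} (h : a + b = 0) : a = b := by
  linear_combination h - b * (deck_two (n := n))

lemma numToCard_zero (n : ℕ) : numToCard n 0 = 0 := by
  funext j; simp [numToCard]

lemma testBit_small (k : ℕ) (j : ℕ) (hk : k < 2 ^ 4) (h : 4 ≤ j) : Nat.testBit k j = false :=
  Nat.testBit_lt_two_pow (lt_of_lt_of_le hk (Nat.pow_le_pow_right (by norm_num) h))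

lemma numToCard_three (n : ℕ) : numToCard n 3 = numToCard n 1 + numToCard n 2 := by
  funext j
  simp only [numToCard, Pi.add_apply]
  rcases Nat.lt_or_ge j.val 4 with h | h
  · interval_cases h : j.val <;> decide
  · rw [testBit_small 3 _ (by norm_num) h, testBit_small 1 _ (by norm_num) h,
      testBit_small 2 _ (by norm_num) h]
    decide

lemma numToCard_twelve (n : ℕ) : numToCard n 12 = numToCard n 4 + numToCard n 8 := by
  funext j
  simp only [numToCard, Pi.add_apply]
  rcases Nat.lt_or_ge j.val 4 with h | h
  · interval_cases h : j.val <;> decide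
  · rw [testBit_small 12 _ (by norm_num) h, testBit_small 4 _ (by norm_num) h,
      testBit_small 8 _ (by norm_num) h]
    decide

/-- The standard family of cards `1, 2, 4, 8`. -/
def stdFam (n : ℕ) (i : Fin 4) : Deck n := numToCard n (2 ^ i.val)

lemma stdFam_one (n : ℕ) : numToCard n 1 = stdFam n 0 := rfl
lemma stdFam_two (n : ℕ) : numToCard n 2 = stdFam n 1 := rfl
lemma stdFam_four (n : ℕ) : numToCard n 4 = stdFam n 2 := rfl
lemma stdFam_eight (n : ℕ) : numToCard n 8 = stdFam n 3 := rfl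

lemma stdFam_eq (n : ℕ) (hn : 4 ≤ n) (i : Fin 4) :
    stdFam n i = Pi.single (Fin.castLE hn i) 1 := by
  funext j
  simp only [stdFam, numToCard]
  by_cases h : j = Fin.castLE hn i
  · subst h
    have : (↑(Fin.castLE hn i) : ℕ) = i.val := rfl
    rw [this, Nat.testBit_two_pow_self]
    simp
  · have hne : i.val ≠ j.val := by
      intro hv
      exact h (Fin.ext (by simp [hv.symm]))
    rw [Nat.testBit_two_pow_of_ne hne]
    simp [Pi.single_eq_of_ne h]

lemma stdFam_li (n : ℕ) (hn : 4 ≤ n) : LinearIndependent (ZMod 2) (stdFam n) := by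
  have : stdFam n = (Pi.basisFun (ZMod 2) (Fin n)) ∘ (Fin.castLE hn) := by
    funext i
    rw [stdFam_eq n hn i]
    simp
  rw [this]
  exact (Pi.basisFun (ZMod 2) (Fin n)).linearIndependent.comp _ (Fin.castLE_injective hn)

lemma sumExtend_inl {K V ι : Type*} [DivisionRing K] [AddCommGroup V] [Module K V]
    {v : ι → V} (hv : LinearIndependent K v) (i : ι) :
    Module.Basis.sumExtend hv (Sum.inl i) = v i := by
  simp only [Module.Basis.sumExtend, Module.Basis.reindex_apply, Equiv.symm_symm, Trans.trans,
    Equiv.trans_apply, Equiv.sumCongr_apply, Sum.map_inl, Module.Basis.extend_apply_self]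
  erw [Equiv.Set.sumDiffSubset_apply_inl]
  simp [Module.Basis.extend_apply_self]
  exact LinearIndepOn.subset_extend _ _

/-- Extend a correspondence between two linearly independent 4-families to a linear
automorphism of the deck. -/
noncomputable def extEquiv {n : ℕ} {v w : Fin 4 → Deck n}
    (hv : LinearIndependent (ZMod 2) v) (hw : LinearIndependent (ZMod 2) w) :
    Deck n ≃ₗ[ZMod 2] Deck n := by
  haveI : Fintype (Module.Basis.sumExtendIndex hv) := Fintype.ofFinite _
  haveI : Fintype (Module.Basis.sumExtendIndex hw) := Fintype.ofFinite _
  have hcard : ∀ {u : Fin 4 → Deck n} (hu : LinearIndependent (ZMod 2) u)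
      [Fintype (Module.Basis.sumExtendIndex hu)], Fintype.card (Module.Basis.sumExtendIndex hu) = n - 4 := by
    intro u hu _
    have h1 := Module.finrank_eq_card_basis (Module.Basis.sumExtend hu)
    have h2 : Module.finrank (ZMod 2) (Deck n) = n := by
      simp [Module.finrank_pi]
    rw [h2, Fintype.card_sum, Fintype.card_fin] at h1
    omega
  exact (Module.Basis.sumExtend hv).equiv (Module.Basis.sumExtend hw)
    (Equiv.sumCongr (Equiv.refl _)
      (Fintype.equivOfCardEq (by rw [hcard hv, hcard hw])))

lemma extEquiv_apply {n : ℕ} {v w : Fin 4 → Deck n}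
    (hv : LinearIndependent (ZMod 2) v) (hw : LinearIndependent (ZMod 2) w) (i : Fin 4) :
    extEquiv hv hw (v i) = w i := by
  rw [← sumExtend_inl hv i, extEquiv, Module.Basis.equiv_apply]
  simp [sumExtend_inl hw]

/-- The frame of a quad square: the differences of the cells `(0,1), (0,2), (1,0), (2,0)`
with the corner. -/
def frameE {n : ℕ} (M : Fin 4 × Fin 4 → Deck n) : Fin 4 → Deck n :=
  ![M (0,1) + M (0,0), M (0,2) + M (0,0), M (1,0) + M (0,0), M (2,0) + M (0,0)]

lemma frameE_li {n : ℕ} {M : Fin 4 × Fin 4 → Deck n} (hinj : Function.Injective M)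
    (hm : IsMagic M) : LinearIndependent (ZMod 2) (frameE M) := by
  have h2 : (2 : Deck n) = 0 := deck_two
  have hrow : M (0,0) + M (0,1) + M (0,2) + M (0,3) = 0 := by
    have := hm.1.1 0; rwa [Fin.sum_univ_four] at this
  have hcol : M (0,0) + M (1,0) + M (2,0) + M (3,0) = 0 := by
    have := hm.1.2 0; rwa [Fin.sum_univ_four] at this
  rw [Fintype.linearIndependent_iff]
  intro g hg
  rw [Fin.sum_univ_four] at hg
  simp only [frameE, Matrix.cons_val_zero, Matrix.cons_val_one, Matrix.head_cons,
    Matrix.cons_val_two, Matrix.tail_cons, Matrix.cons_val_three] at hg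
  have hx : ∀ x : ZMod 2, x = 0 ∨ x = 1 := by decide
  have key : g 0 = 0 ∧ g 1 = 0 ∧ g 2 = 0 ∧ g 3 = 0 := by
    rcases hx (g 0) with h0 | h0 <;> rcases hx (g 1) with h1 | h1 <;>
      rcases hx (g 2) with hc | hc <;> rcases hx (g 3) with h3 | h3 <;>
      simp only [h0, h1, hc, h3, one_smul, zero_smul, add_zero, zero_add] at hg ⊢
    case inl.inl.inl.inl => exact ⟨trivial, trivial, trivial, trivial⟩
    case inl.inl.inl.inr =>
      exact absurd (deck_eq_of_add_eq_zero hg)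
        (hinj.ne (show ((2:Fin 4),(0:Fin 4)) ≠ (0,0) by decide))
    case inl.inl.inr.inl =>
      exact absurd (deck_eq_of_add_eq_zero hg)
        (hinj.ne (show ((1:Fin 4),(0:Fin 4)) ≠ (0,0) by decide))
    case inl.inl.inr.inr =>
      exact absurd (deck_eq_of_add_eq_zero (by linear_combination hg - M (0,0) * h2))
        (hinj.ne (show ((1:Fin 4),(0:Fin 4)) ≠ (2,0) by decide))
    case inl.inr.inl.inl =>
      exact absurd (deck_eq_of_add_eq_zero hg)
        (hinj.ne (show ((0:Fin 4),(2:Fin 4)) ≠ (0,0) by decide))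
    case inl.inr.inl.inr =>
      exact absurd (deck_eq_of_add_eq_zero (by linear_combination hg - M (0,0) * h2))
        (hinj.ne (show ((0:Fin 4),(2:Fin 4)) ≠ (2,0) by decide))
    case inl.inr.inr.inl =>
      exact absurd (deck_eq_of_add_eq_zero (by linear_combination hg - M (0,0) * h2))
        (hinj.ne (show ((0:Fin 4),(2:Fin 4)) ≠ (1,0) by decide))
    case inl.inr.inr.inr =>
      exact absurd (deck_eq_of_add_eq_zero (by
          linear_combination hg + hcol - (M (1,0) + M (2,0) + 2 * M (0,0)) * h2))
        (hinj.ne (show ((0:Fin 4),(2:Fin 4)) ≠ (3,0) by decide))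
    case inr.inl.inl.inl =>
      exact absurd (deck_eq_of_add_eq_zero hg)
        (hinj.ne (show ((0:Fin 4),(1:Fin 4)) ≠ (0,0) by decide))
    case inr.inl.inl.inr =>
      exact absurd (deck_eq_of_add_eq_zero (by linear_combination hg - M (0,0) * h2))
        (hinj.ne (show ((0:Fin 4),(1:Fin 4)) ≠ (2,0) by decide))
    case inr.inl.inr.inl =>
      exact absurd (deck_eq_of_add_eq_zero (by linear_combination hg - M (0,0) * h2))
        (hinj.ne (show ((0:Fin 4),(1:Fin 4)) ≠ (1,0) by decide))
    case inr.inl.inr.inr =>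
      exact absurd (deck_eq_of_add_eq_zero (by
          linear_combination hg + hcol - (M (1,0) + M (2,0) + 2 * M (0,0)) * h2))
        (hinj.ne (show ((0:Fin 4),(1:Fin 4)) ≠ (3,0) by decide))
    case inr.inr.inl.inl =>
      exact absurd (deck_eq_of_add_eq_zero (by linear_combination hg - M (0,0) * h2))
        (hinj.ne (show ((0:Fin 4),(1:Fin 4)) ≠ (0,2) by decide))
    case inr.inr.inl.inr =>
      exact absurd (deck_eq_of_add_eq_zero (by
          linear_combination hg + hrow - (M (0,1) + M (0,2) + 2 * M (0,0)) * h2))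
        (hinj.ne (show ((0:Fin 4),(3:Fin 4)) ≠ (2,0) by decide))
    case inr.inr.inr.inl =>
      exact absurd (deck_eq_of_add_eq_zero (by
          linear_combination hg + hrow - (M (0,1) + M (0,2) + 2 * M (0,0)) * h2))
        (hinj.ne (show ((0:Fin 4),(3:Fin 4)) ≠ (1,0) by decide))
    case inr.inr.inr.inr =>
      exact absurd (deck_eq_of_add_eq_zero (by
          linear_combination hg + hrow + hcol -
            (M (0,1) + M (0,2) + M (1,0) + M (2,0) + 3 * M (0,0)) * h2))
        (hinj.ne (show ((0:Fin 4),(3:Fin 4)) ≠ (3,0) by decide))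
  intro i
  fin_cases i <;> tauto

end Aux

section Main

variable {n : ℕ}

/-- Transformation of a square by a linear automorphism and a translation. -/
def squareMap (f : Deck n ≃ₗ[ZMod 2] Deck n) (t : Deck n) :
    (Fin 4 × Fin 4 → Deck n) ≃ (Fin 4 × Fin 4 → Deck n) where
  toFun M := fun p => f.symm (M p + t)
  invFun N := fun p => f (N p) + t
  left_inv M := by
    funext p
    show f (f.symm (M p + t)) + t = M p
    rw [LinearEquiv.apply_symm_apply, add_assoc, deck_add_self, add_zero]
  right_inv N := by
    funext p
    show f.symm (f (N p) + t + t) = N p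
    rw [add_assoc, deck_add_self, add_zero, LinearEquiv.symm_apply_apply]

lemma squareMap_inj_iff (f : Deck n ≃ₗ[ZMod 2] Deck n) (t : Deck n)
    (M : Fin 4 × Fin 4 → Deck n) :
    Function.Injective (squareMap f t M) ↔ Function.Injective M := by
  have : squareMap f t M = (fun x => f.symm (x + t)) ∘ M := rfl
  rw [this]
  constructor
  · intro h
    intro a b hab
    exact h (by simp [Function.comp, hab])
  · intro h
    apply Function.Injective.comp _ h
    intro a b hab
    simpa using f.symm.injective hab

lemma squareMap_quad (f : Deck n ≃ₗ[ZMod 2] Deck n) (t : Deck n) (a b c d : Deck n) :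
    f.symm (a + t) + f.symm (b + t) + f.symm (c + t) + f.symm (d + t) = 0 ↔
      a + b + c + d = 0 := by
  have h : f.symm (a + t) + f.symm (b + t) + f.symm (c + t) + f.symm (d + t) =
      f.symm (a + b + c + d) := by
    rw [← map_add, ← map_add, ← map_add]
    congr 1
    linear_combination (2 * t) * (deck_two (n := n))
  rw [h, EmbeddingLike.map_eq_zero_iff]

lemma squareMap_magic_iff (f : Deck n ≃ₗ[ZMod 2] Deck n) (t : Deck n)
    (M : Fin 4 × Fin 4 → Deck n) :
    IsMagic (squareMap f t M) ↔ IsMagic M := by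
  simp only [IsMagic, IsSemimagic, Fin.sum_univ_four, squareMap, Equiv.coe_fn_mk,
    squareMap_quad]

lemma frameE_apply_zero (M : Fin 4 × Fin 4 → Deck n) : frameE M 0 = M (0,1) + M (0,0) := rfl
lemma frameE_apply_one (M : Fin 4 × Fin 4 → Deck n) : frameE M 1 = M (0,2) + M (0,0) := rfl
lemma frameE_apply_two (M : Fin 4 × Fin 4 → Deck n) : frameE M 2 = M (1,0) + M (0,0) := rfl
lemma frameE_apply_three (M : Fin 4 × Fin 4 → Deck n) : frameE M 3 = M (2,0) + M (0,0) := rfl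

lemma main_iff (hn : 4 ≤ n) (t : Deck n) (e : Fin 4 → Deck n)
    (he : LinearIndependent (ZMod 2) e) (M : Fin 4 × Fin 4 → Deck n) :
    (Function.Injective M ∧ IsMagic M) ∧ (M (0,0) = t ∧ frameE M = e) ↔
      Function.Injective (squareMap (extEquiv (stdFam_li n hn) he) t M) ∧
      IsMagic (squareMap (extEquiv (stdFam_li n hn) he) t M) ∧
      IsTypeC (squareMap (extEquiv (stdFam_li n hn) he) t M) := by
  set f := extEquiv (stdFam_li n hn) he with hfdef
  have hf : ∀ i, f (stdFam n i) = e i := extEquiv_apply _ _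
  have hfs : ∀ i, f.symm (e i) = stdFam n i := fun i => by
    rw [← hf i, LinearEquiv.symm_apply_apply]
  have h2 : (2 : Deck n) = 0 := deck_two
  have happ : ∀ p, squareMap f t M p = f.symm (M p + t) := fun p => rfl
  constructor
  · rintro ⟨⟨hinj, hm⟩, ht, he'⟩
    have hrow : M (0,0) + M (0,1) + M (0,2) + M (0,3) = 0 := by
      have := hm.1.1 0; rwa [Fin.sum_univ_four] at this
    have hcol : M (0,0) + M (1,0) + M (2,0) + M (3,0) = 0 := by
      have := hm.1.2 0; rwa [Fin.sum_univ_four] at this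
    have hE0 : M (0,1) + M (0,0) = e 0 := by rw [← he']; rfl
    have hE1 : M (0,2) + M (0,0) = e 1 := by rw [← he']; rfl
    have hE2 : M (1,0) + M (0,0) = e 2 := by rw [← he']; rfl
    have hE3 : M (2,0) + M (0,0) = e 3 := by rw [← he']; rfl
    refine ⟨(squareMap_inj_iff f t M).mpr hinj, (squareMap_magic_iff f t M).mpr hm, ?_, ?_⟩
    · intro j
      fin_cases j
      · show f.symm (M (0,0) + t) = numToCard n (0 : Fin 4).val
        rw [ht, deck_add_self, map_zero]
        exact (numToCard_zero n).symm
      · show f.symm (M (0,1) + t) = numToCard n (1 : Fin 4).val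
        have : M (0,1) + t = e 0 := by rw [← ht]; exact hE0
        rw [this, hfs]
        exact (stdFam_one n).symm
      · show f.symm (M (0,2) + t) = numToCard n (2 : Fin 4).val
        have : M (0,2) + t = e 1 := by rw [← ht]; exact hE1
        rw [this, hfs]
        exact (stdFam_two n).symm
      · show f.symm (M (0,3) + t) = numToCard n (3 : Fin 4).val
        have : M (0,3) + t = e 0 + e 1 := by
          linear_combination hrow - hE0 - hE1 + ht + (t - e 0 - e 1) * h2
        rw [this, map_add, hfs, hfs, ← stdFam_one, ← stdFam_two]
        exact (numToCard_three n).symm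
    · intro i
      fin_cases i
      · show f.symm (M (0,0) + t) = numToCard n (4 * (0 : Fin 4).val)
        rw [ht, deck_add_self, map_zero]
        exact (numToCard_zero n).symm
      · show f.symm (M (1,0) + t) = numToCard n (4 * (1 : Fin 4).val)
        have : M (1,0) + t = e 2 := by rw [← ht]; exact hE2
        rw [this, hfs]
        exact (stdFam_four n).symm
      · show f.symm (M (2,0) + t) = numToCard n (4 * (2 : Fin 4).val)
        have : M (2,0) + t = e 3 := by rw [← ht]; exact hE3
        rw [this, hfs]
        exact (stdFam_eight n).symm
      · show f.symm (M (3,0) + t) = numToCard n (4 * (3 : Fin 4).val)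
        have : M (3,0) + t = e 2 + e 3 := by
          linear_combination hcol - hE2 - hE3 + ht + (t - e 2 - e 3) * h2
        rw [this, map_add, hfs, hfs, ← stdFam_four, ← stdFam_eight]
        exact (numToCard_twelve n).symm
  · rintro ⟨hinj', hm', hc⟩
    have hinj := (squareMap_inj_iff f t M).mp hinj'
    have hm := (squareMap_magic_iff f t M).mp hm'
    have key : ∀ (p : Fin 4 × Fin 4) (k : ℕ),
        squareMap f t M p = numToCard n k → M p + t = f (numToCard n k) := by
      intro p k h
      rw [← h, happ, LinearEquiv.apply_symm_apply]
    have ht : M (0,0) = t := by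
      have h0 := key (0,0) 0 (hc.1 0)
      rw [numToCard_zero, map_zero] at h0
      exact deck_eq_of_add_eq_zero h0
    refine ⟨⟨hinj, hm⟩, ht, ?_⟩
    funext k
    fin_cases k
    · show frameE M 0 = e 0
      rw [frameE_apply_zero, ht]
      have := key (0,1) 1 (hc.1 1)
      rwa [stdFam_one, hf] at this
    · show frameE M 1 = e 1
      rw [frameE_apply_one, ht]
      have := key (0,2) 2 (hc.1 2)
      rwa [stdFam_two, hf] at this
    · show frameE M 2 = e 2
      rw [frameE_apply_two, ht]
      have := key (1,0) 4 (by have := hc.2 1; simpa using this)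
      rwa [stdFam_four, hf] at this
    · show frameE M 3 = e 3
      rw [frameE_apply_three, ht]
      have := key (2,0) 8 (by have := hc.2 2; simpa using this)
      rwa [stdFam_eight, hf] at this

end Main

theorem magic_count_eq_factor_mul_typeC (n : ℕ) (hn : 4 ≤ n) :
    (Nat.card {M : Fin 4 × Fin 4 → Deck n // Function.Injective M ∧ IsMagic M} : ℤ) =
      2 ^ n * (2 ^ n - 1) * (2 ^ n - 2) * (2 ^ n - 4) * (2 ^ n - 8) *
        (Nat.card {M : Fin 4 × Fin 4 → Deck n //
          Function.Injective M ∧ IsMagic M ∧ IsTypeC M} : ℤ) := by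
  classical
  set P : (Fin 4 × Fin 4 → Deck n) → Prop := fun M => Function.Injective M ∧ IsMagic M with hP
  set Q : (Fin 4 × Fin 4 → Deck n) → Prop :=
    fun M => Function.Injective M ∧ IsMagic M ∧ IsTypeC M with hQ
  let Idx := Deck n × {e : Fin 4 → Deck n // LinearIndependent (ZMod 2) e}
  let θ : {M // P M} → Idx := fun x => (x.1 (0,0), ⟨frameE x.1, frameE_li x.2.1 x.2.2⟩)
  let E0 : {M // P M} ≃ Σ F : Idx, {x : {M // P M} // θ x = F} :=
    (Equiv.sigmaFiberEquiv θ).symm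
  have fiberEquiv : ∀ F : Idx, {x : {M // P M} // θ x = F} ≃ {N // Q N} := by
    intro F
    refine ((Equiv.subtypeEquivRight ?_).trans
      ((Equiv.subtypeSubtypeEquivSubtypeInter P
        (fun M => M (0,0) = F.1 ∧ frameE M = F.2.1)).trans
      (Equiv.subtypeEquiv (squareMap (extEquiv (stdFam_li n hn) F.2.2) F.1) ?_)))
    · intro x
      constructor
      · intro h
        rw [← h]
        exact ⟨rfl, rfl⟩
      · intro ⟨h1, h2⟩
        have : (⟨frameE x.1, frameE_li x.2.1 x.2.2⟩ :
            {e : Fin 4 → Deck n // LinearIndependent (ZMod 2) e}) = F.2 :=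
          Subtype.ext h2
        exact Prod.ext h1 this
    · intro M
      exact main_iff hn F.1 F.2.1 F.2.2 M
  let E : {M // P M} ≃ Idx × {N // Q N} :=
    (E0.trans (Equiv.sigmaCongrRight fiberEquiv)).trans (Equiv.sigmaEquivProd _ _)
  have hfr : Module.finrank (ZMod 2) (Deck n) = n := by simp [Module.finrank_pi]
  have hLI : Nat.card {e : Fin 4 → Deck n // LinearIndependent (ZMod 2) e} =
      (2^n - 1) * ((2^n - 2) * ((2^n - 4) * (2^n - 8))) := by
    have h := card_linearIndependent (K := ZMod 2) (V := Deck n) (k := 4) (by rw [hfr]; exact hn)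
    rw [hfr, ZMod.card, Fin.prod_univ_four] at h
    rw [h]
    simp only [show ((0:Fin 4):ℕ) = 0 from rfl, show ((1:Fin 4):ℕ) = 1 from rfl,
      show ((2:Fin 4):ℕ) = 2 from rfl, show ((3:Fin 4):ℕ) = 3 from rfl]
    norm_num [mul_assoc]
  have hdeck : Nat.card (Deck n) = 2^n := by
    simp [Nat.card_eq_fintype_card, ZMod.card]
  have hcount : Nat.card {M // P M} =
      (2^n * ((2^n - 1) * ((2^n - 2) * ((2^n - 4) * (2^n - 8))))) * Nat.card {N // Q N} := by
    rw [Nat.card_congr E, Nat.card_prod, Nat.card_prod, hdeck, hLI, mul_assoc]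
  have h8 : (8 : ℕ) ≤ 2^n := by
    calc (8 : ℕ) = 2^3 := by norm_num
    _ ≤ 2^n := Nat.pow_le_pow_right (by norm_num) (by omega)
  have h4 : (4 : ℕ) ≤ 2^n := by omega
  have h2 : (2 : ℕ) ≤ 2^n := by omega
  have h1 : (1 : ℕ) ≤ 2^n := by omega
  rw [hcount]
  push_cast [Nat.cast_sub h1, Nat.cast_sub h2, Nat.cast_sub h4, Nat.cast_sub h8]
  ring
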